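/- Let d be a prime, p a prime not dividing n, and s₁ ≠ s₂ ∈ {1,…,d−1}. Then gcd(gcd(n^d−1, p^d−1, n−p^{s₁}), gcd(n^d−1, p^d−1, n−p^{s₂})) divides gcd(n−1, p−1) · d. -/

import Mathlib

/-- For `d` prime, `p` a prime not dividing `n`, and distinct `s₁ ≠ s₂` in `{1,…,d−1}`,
the gcd of `gcd(n^d−1, p^d−1, n−p^{s₁})` and `gcd(n^d−1, p^d−1, n−p^{s₂})` divides
`gcd(n−1, p−1) · d`. -/
theorem stmt_7 {n d p s₁ s₂ : ℕ} (hd : d.Prime) (hp : p.Prime) (hpn : ¬ p ∣ n)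
    (hs₁ : 1 ≤ s₁) (hs₁' : s₁ ≤ d - 1) (hs₂ : 1 ≤ s₂) (hs₂' : s₂ ≤ d - 1)
    (hne : s₁ ≠ s₂) :
    Nat.gcd
        (Int.gcd (Int.gcd ((n : ℤ) ^ d - 1) ((p : ℤ) ^ d - 1)) ((n : ℤ) - (p : ℤ) ^ s₁))
        (Int.gcd (Int.gcd ((n : ℤ) ^ d - 1) ((p : ℤ) ^ d - 1)) ((n : ℤ) - (p : ℤ) ^ s₂)) ∣
      Int.gcd ((n : ℤ) - 1) ((p : ℤ) - 1) * d := by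
  set A := Int.gcd (Int.gcd ((n : ℤ) ^ d - 1) ((p : ℤ) ^ d - 1)) ((n : ℤ) - (p : ℤ) ^ s₁) with hA
  set B := Int.gcd (Int.gcd ((n : ℤ) ^ d - 1) ((p : ℤ) ^ d - 1)) ((n : ℤ) - (p : ℤ) ^ s₂) with hB
  set M := Nat.gcd A B with hMdef
  have hMA : (M:ℤ) ∣ (A:ℤ) := Int.natCast_dvd_natCast.mpr (Nat.gcd_dvd_left A B)
  have hMB : (M:ℤ) ∣ (B:ℤ) := Int.natCast_dvd_natCast.mpr (Nat.gcd_dvd_right A B)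
  have h1 : (M:ℤ) ∣ (p:ℤ)^d - 1 := hMA.trans ((Int.gcd_dvd_left _ _).trans (Int.gcd_dvd_right _ _))
  have h2 : (M:ℤ) ∣ (n:ℤ) - (p:ℤ)^s₁ := hMA.trans (Int.gcd_dvd_right _ _)
  have h3 : (M:ℤ) ∣ (n:ℤ) - (p:ℤ)^s₂ := hMB.trans (Int.gcd_dvd_right _ _)
  have hd2 := hd.two_le
  -- M is coprime to p
  have hpM : ¬ p ∣ M := by
    intro h
    have hpZ : ((p:ℤ)) ∣ (p:ℤ)^d - 1 := (Int.natCast_dvd_natCast.mpr h).trans h1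
    have h1' : ((p:ℤ)) ∣ 1 := (dvd_sub_right (dvd_pow_self (p:ℤ) (by omega))).mp hpZ
    have := Int.le_of_dvd one_pos h1'
    have := hp.two_le
    omega
  -- key: from M ∣ p^u - p^t with 1 ≤ t < u ≤ d-1, deduce M ∣ p - 1
  have key : ∀ t u : ℕ, 1 ≤ t → t < u → u ≤ d - 1 → (M:ℤ) ∣ (p:ℤ)^u - (p:ℤ)^t →
      (M:ℤ) ∣ (p:ℤ) - 1 := by
    intro t u ht htu hu hdvd
    set s := u - t with hs
    have hs0 : 0 < s := by omega
    have hsd : s < d := by omega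
    have hfac : (p:ℤ)^u - (p:ℤ)^t = (p:ℤ)^t * ((p:ℤ)^s - 1) := by
      rw [mul_sub, mul_one, ← pow_add]
      congr 2
      omega
    rw [hfac] at hdvd
    have hcopN : Nat.Coprime M p := ((hp.coprime_iff_not_dvd).mpr hpM).symm
    have hcop : IsCoprime ((M:ℤ)) ((p:ℤ)^t) := by
      rw [Int.isCoprime_iff_gcd_eq_one]
      have : ((p:ℤ)^t) = ((p^t : ℕ) : ℤ) := by push_cast; ring
      rw [this, Int.gcd_natCast_natCast]
      exact hcopN.pow_right t
    have hMs : (M:ℤ) ∣ (p:ℤ)^s - 1 := hcop.dvd_of_dvd_mul_left hdvd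
    -- pass to ZMod M
    have e1 : (p : ZMod M)^s = 1 := by
      have := (ZMod.intCast_zmod_eq_zero_iff_dvd ((p:ℤ)^s - 1) M).mpr hMs
      push_cast at this
      linear_combination this
    have e2 : (p : ZMod M)^d = 1 := by
      have := (ZMod.intCast_zmod_eq_zero_iff_dvd ((p:ℤ)^d - 1) M).mpr h1
      push_cast at this
      linear_combination this
    have hgcd1 : Nat.gcd s d = 1 := by
      have : ¬ d ∣ s := fun h => absurd (Nat.le_of_dvd hs0 h) (by omega)
      exact (Nat.coprime_comm.mp ((hd.coprime_iff_not_dvd).mpr this))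
    have hord : orderOf (p : ZMod M) ∣ 1 := by
      rw [← hgcd1]
      exact Nat.dvd_gcd (orderOf_dvd_of_pow_eq_one e1) (orderOf_dvd_of_pow_eq_one e2)
    have hp1 : (p : ZMod M) = 1 := orderOf_eq_one_iff.mp (Nat.dvd_one.mp hord)
    have : (((p:ℤ) - 1 : ℤ) : ZMod M) = 0 := by push_cast; rw [hp1]; ring
    exact (ZMod.intCast_zmod_eq_zero_iff_dvd _ _).mp this
  -- apply key in either order
  have hMp1 : (M:ℤ) ∣ (p:ℤ) - 1 := by
    rcases Nat.lt_or_ge s₁ s₂ with h | h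
    · exact key s₁ s₂ hs₁ h hs₂' (by
        have := dvd_sub h2 h3
        rwa [sub_sub_sub_cancel_left] at this)
    · have hlt : s₂ < s₁ := by omega
      exact key s₂ s₁ hs₂ hlt hs₁' (by
        have := dvd_sub h3 h2
        rwa [sub_sub_sub_cancel_left] at this)
  have hMps : (M:ℤ) ∣ (p:ℤ)^s₁ - 1 := hMp1.trans (by simpa using sub_dvd_pow_sub_pow (p:ℤ) 1 s₁)
  have hMn1 : (M:ℤ) ∣ (n:ℤ) - 1 := by
    have := dvd_add h2 hMps
    rwa [sub_add_sub_cancel] at this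
  have hfin : (M:ℤ) ∣ (Int.gcd ((n : ℤ) - 1) ((p : ℤ) - 1) : ℤ) := Int.natCast_dvd_natCast.mpr (Int.dvd_gcd hMn1 hMp1)
  exact Dvd.dvd.mul_right (Int.natCast_dvd_natCast.mp hfin) d
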